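/- arXiv:2509.17591 — 2 statements merged into one kernel-verified Lean document; each statement's English description precedes it below -/
import Mathlib

section
/- Let ≤_T be either the lexicographic order with X₁ > X₂ or the graded order with X₂ > X₁. Let 2 ≤ t ≤ 4 with t ≤ ⌊r₁/2⌋ and t ≤ ⌊r₂/2⌋, let e ∈ 𝔽(r₁,r₂) with ω(e) ≤ t, let τ ∈ 𝓘, and let U be the syndrome table afforded by τ and e. Let l = (1,3) ∈ 𝔉. Let F = {f^(1), f^(2)} be a minimal set of polynomials for u^l with defining points s^(1) = (2,0) and s^(2) = (0,2), and let (g, k₁) be an auxiliary polynomial for index 1 with v₁ = g[U]_{k₁} ≠ 0. Then there exists b ∈ L such that the polynomial h_b = f^(2) − (b/v₁)·g generates u^l and satisfies h_b[U]_k = 0 for every k ∈ B(2t+1) with l ≤_T k. -/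
/-- A monomial order on ℕ × ℕ: a linear order compatible with addition
for which (0,0) is the least element. -/
structure MonOrd where
  le : ℕ × ℕ → ℕ × ℕ → Prop
  refl : ∀ a, le a a
  trans : ∀ a b c, le a b → le b c → le a c
  antisymm : ∀ a b, le a b → le b a → a = b
  total : ∀ a b, le a b ∨ le b a
  add_right : ∀ a b c, le a b → le (a + c) (b + c)
  zero_le : ∀ a, le (0, 0) a

/-- Strict version of a monomial order. -/
def MonOrd.lt (T : MonOrd) (a b : ℕ × ℕ) : Prop := T.le a b ∧ a ≠ b

/-- `s` is the leading power product exponent of `f` w.r.t. `T`. -/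
def IsLP {L : Type} [Field L] (T : MonOrd) (f : (ℕ × ℕ) →₀ L) (s : ℕ × ℕ) : Prop :=
  s ∈ f.support ∧ ∀ m ∈ f.support, T.le m s

/-- `f[U]_n`, computed with respect to a given leading exponent `s` of `f`. -/
noncomputable def fApp {L : Type} [Field L] (U : ℕ × ℕ → L) (f : (ℕ × ℕ) →₀ L)
    (s n : ℕ × ℕ) : L :=
  if s.1 ≤ n.1 ∧ s.2 ≤ n.2 then
    ∑ m ∈ f.support, f m * U (m.1 + n.1 - s.1, m.2 + n.2 - s.2)
  else 0

/-- `f` generates the doubly periodic array `U`. -/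
def GeneratesU {L : Type} [Field L] (T : MonOrd) (U : ℕ × ℕ → L) (f : (ℕ × ℕ) →₀ L) : Prop :=
  ∃ s, IsLP T f s ∧ ∀ n, fApp U f s n = 0

/-- `f` generates the finite subarray `u^l` of `U`. -/
def GeneratesUpTo {L : Type} [Field L] (T : MonOrd) (U : ℕ × ℕ → L) (l : ℕ × ℕ)
    (f : (ℕ × ℕ) →₀ L) : Prop :=
  ∃ s, IsLP T f s ∧ ∀ k, s.1 ≤ k.1 → s.2 ≤ k.2 → T.lt k l → fApp U f s k = 0

/-- `U` is a doubly periodic array of period r₁ × r₂. -/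
def DoublyPeriodic {L : Type} (r₁ r₂ : ℕ) (U : ℕ × ℕ → L) : Prop :=
  ∀ n m : ℕ × ℕ, n.1 % r₁ = m.1 % r₁ → n.2 % r₂ = m.2 % r₂ → U n = U m

/-- Evaluation of a bivariate polynomial at a point `(x, y)`. -/
noncomputable def polyEval {L : Type} [Field L] (f : (ℕ × ℕ) →₀ L) (x y : L) : L :=
  ∑ m ∈ f.support, f m * x ^ m.1 * y ^ m.2

/-- The syndrome table afforded by `τ` and `e`:  `u_n = e(α^(τ+n))`. -/
noncomputable def synTable {F L : Type} [Field F] [Field L] [Algebra F L] {r₁ r₂ : ℕ}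
    (α₁ α₂ : L) (τ : Fin r₁ × Fin r₂) (e : Fin r₁ × Fin r₂ → F) : ℕ × ℕ → L :=
  fun n => ∑ p : Fin r₁ × Fin r₂,
    algebraMap F L (e p) * (α₁ ^ ((τ.1 : ℕ) + n.1)) ^ (p.1 : ℕ)
      * (α₂ ^ ((τ.2 : ℕ) + n.2)) ^ (p.2 : ℕ)

/-- The weight ω(e): number of nonzero coefficients. -/
noncomputable def wt {F : Type} [Field F] {r₁ r₂ : ℕ} (e : Fin r₁ × Fin r₂ → F) : ℕ :=
  {p | e p ≠ 0}.ncard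

/-- The hyperbolic set B(δ) of amplitude δ inside {0,…,r₁−1} × {0,…,r₂−1}. -/
def hypB (r₁ r₂ δ : ℕ) : Set (ℕ × ℕ) :=
  {l | l.1 < r₁ ∧ l.2 < r₂ ∧ (l.1 + 1) * (l.2 + 1) ≤ δ ∧ l ≠ (δ - 1, 0) ∧ l ≠ (0, δ - 1)}

/-- The border set 𝔉 = {l ∈ B(2t+1) : 2t ≤ (l₁+1)(l₂+1)}. -/
def frontF (r₁ r₂ t : ℕ) : Set (ℕ × ℕ) :=
  {l ∈ hypB r₁ r₂ (2 * t + 1) | 2 * t ≤ (l.1 + 1) * (l.2 + 1)}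

/-- The lexicographic order with X₁ > X₂. -/
def lexMonOrd : MonOrd where
  le a b := a.1 < b.1 ∨ (a.1 = b.1 ∧ a.2 ≤ b.2)
  refl a := by omega
  trans a b c h1 h2 := by omega
  antisymm a b h1 h2 := by
    obtain ⟨a1, a2⟩ := a; obtain ⟨b1, b2⟩ := b
    simp_all only [Prod.mk.injEq]; omega
  total a b := by omega
  add_right a b c h := by
    obtain ⟨a1, a2⟩ := a; obtain ⟨b1, b2⟩ := b; obtain ⟨c1, c2⟩ := c
    simp_all only [Prod.mk_add_mk]; omega
  zero_le a := by
    obtain ⟨a1, a2⟩ := a; simp only []; omega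

/-- The (reverse) graded order with X₂ > X₁. -/
def grMonOrd : MonOrd where
  le a b := a.1 + a.2 < b.1 + b.2 ∨ (a.1 + a.2 = b.1 + b.2 ∧ a.2 ≤ b.2)
  refl a := by omega
  trans a b c h1 h2 := by omega
  antisymm a b h1 h2 := by
    obtain ⟨a1, a2⟩ := a; obtain ⟨b1, b2⟩ := b
    simp_all only [Prod.mk.injEq]; omega
  total a b := by omega
  add_right a b c h := by
    obtain ⟨a1, a2⟩ := a; obtain ⟨b1, b2⟩ := b; obtain ⟨c1, c2⟩ := c
    simp_all only [Prod.mk_add_mk]; omega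
  zero_le a := by
    obtain ⟨a1, a2⟩ := a; simp only []; omega

/-- The ideal (X₁^{r₁} − 1, X₂^{r₂} − 1) of L[X₁,X₂]. -/
noncomputable def periodIdeal (L : Type) [Field L] (r₁ r₂ : ℕ) :
    Ideal (AddMonoidAlgebra L (ℕ × ℕ)) :=
  Ideal.span {AddMonoidAlgebra.single (r₁, 0) 1 - 1, AddMonoidAlgebra.single (0, r₂) 1 - 1}


section AuxHelpers
variable {F L : Type} [Field F] [Field L] [Algebra F L] {r₁ r₂ : ℕ}

/-- coefficient of point p in the syndrome table -/
noncomputable def cc (α₁ α₂ : L) (τ : Fin r₁ × Fin r₂) (e : Fin r₁ × Fin r₂ → F)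
    (p : Fin r₁ × Fin r₂) : L :=
  algebraMap F L (e p) * (α₁ ^ (p.1 : ℕ)) ^ (τ.1 : ℕ) * (α₂ ^ (p.2 : ℕ)) ^ (τ.2 : ℕ)

lemma synTable_eq (α₁ α₂ : L) (τ : Fin r₁ × Fin r₂) (e : Fin r₁ × Fin r₂ → F) (n : ℕ × ℕ) :
    synTable α₁ α₂ τ e n = ∑ p : Fin r₁ × Fin r₂,
      cc α₁ α₂ τ e p * (α₁ ^ (p.1 : ℕ)) ^ n.1 * (α₂ ^ (p.2 : ℕ)) ^ n.2 := by
  unfold synTable cc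
  refine Finset.sum_congr rfl fun p _ => ?_
  have ex : ∀ (x : L) (a b c : ℕ), (x ^ (a + b)) ^ c = (x ^ c) ^ a * (x ^ c) ^ b := by
    intro x a b c
    rw [← pow_mul, ← pow_mul, ← pow_mul, ← pow_add]
    congr 1
    ring
  rw [ex, ex]
  ring

lemma polyEval_def' (f : (ℕ × ℕ) →₀ L) (x y : L) :
    polyEval f x y = f.sum (fun m a => a * x ^ m.1 * y ^ m.2) := rfl

lemma polyEval_sub_smul (f g : (ℕ × ℕ) →₀ L) (c x y : L) :
    polyEval (f - c • g) x y = polyEval f x y - c * polyEval g x y := by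
  rw [polyEval_def', polyEval_def', polyEval_def', Finsupp.sum_sub_index
    (fun a b₁ b₂ => by ring)]
  congr 1
  rw [Finsupp.sum_smul_index (fun i => by ring), Finsupp.mul_sum]
  refine Finsupp.sum_congr fun m _ => by ring

lemma fApp_synTable (α₁ α₂ : L) (τ : Fin r₁ × Fin r₂) (e : Fin r₁ × Fin r₂ → F)
    (f : (ℕ × ℕ) →₀ L) (s n : ℕ × ℕ) (h1 : s.1 ≤ n.1) (h2 : s.2 ≤ n.2) :
    fApp (synTable α₁ α₂ τ e) f s n = ∑ p : Fin r₁ × Fin r₂,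
      cc α₁ α₂ τ e p * (α₁ ^ (p.1 : ℕ)) ^ (n.1 - s.1) * (α₂ ^ (p.2 : ℕ)) ^ (n.2 - s.2)
        * polyEval f (α₁ ^ (p.1 : ℕ)) (α₂ ^ (p.2 : ℕ)) := by
  unfold fApp
  rw [if_pos ⟨h1, h2⟩]
  have key : ∀ m ∈ f.support, f m * synTable α₁ α₂ τ e (m.1 + n.1 - s.1, m.2 + n.2 - s.2)
      = ∑ p : Fin r₁ × Fin r₂, f m * (cc α₁ α₂ τ e p * (α₁ ^ (p.1 : ℕ)) ^ (m.1 + (n.1 - s.1))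
        * (α₂ ^ (p.2 : ℕ)) ^ (m.2 + (n.2 - s.2))) := by
    intro m _
    rw [synTable_eq, Finset.mul_sum]
    have e1 : m.1 + n.1 - s.1 = m.1 + (n.1 - s.1) := by omega
    have e2 : m.2 + n.2 - s.2 = m.2 + (n.2 - s.2) := by omega
    simp only [e1, e2]
  rw [Finset.sum_congr rfl key, Finset.sum_comm]
  refine Finset.sum_congr rfl fun p _ => ?_
  simp only [polyEval]
  rw [Finset.mul_sum]
  refine Finset.sum_congr rfl fun m _ => ?_
  rw [pow_add, pow_add]
  ring

lemma polyEval_add (f g : (ℕ × ℕ) →₀ L) (x y : L) :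
    polyEval (f + g) x y = polyEval f x y + polyEval g x y := by
  rw [polyEval_def', polyEval_def', polyEval_def',
    Finsupp.sum_add_index (fun a _ => by ring) (fun a _ b₁ b₂ => by ring)]

lemma polyEval_single (m : ℕ × ℕ) (a : L) (x y : L) :
    polyEval (Finsupp.single m a) x y = a * x ^ m.1 * y ^ m.2 := by
  rw [polyEval_def', Finsupp.sum_single_index (by ring)]

lemma exists_T_max (T : MonOrd) : ∀ (s : Finset (ℕ × ℕ)), s.Nonempty →
    ∃ m ∈ s, ∀ x ∈ s, T.le x m := by
  classical
  intro s
  induction s using Finset.induction_on with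
  | empty => intro hs; exact absurd hs (by simp)
  | @insert a s ha ih =>
    intro _
    rcases s.eq_empty_or_nonempty with rfl | hne
    · exact ⟨a, by simp, by simp [T.refl]⟩
    · obtain ⟨m, hm, hmax⟩ := ih hne
      rcases T.total a m with h | h
      · refine ⟨m, Finset.mem_insert_of_mem hm, fun x hx => ?_⟩
        rcases Finset.mem_insert.1 hx with rfl | hx
        · exact h
        · exact hmax x hx
      · refine ⟨a, Finset.mem_insert_self _ _, fun x hx => ?_⟩
        rcases Finset.mem_insert.1 hx with heq | hx
        · exact heq ▸ T.refl _
        · exact T.trans _ _ _ (hmax x hx) h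

end AuxHelpers


lemma monOrd_lt_iff (T : MonOrd) (a b : ℕ × ℕ) : T.lt a b ↔ T.le a b ∧ a ≠ b := Iff.rfl

lemma lex_le_iff (a b : ℕ × ℕ) :
    lexMonOrd.le a b ↔ (a.1 < b.1 ∨ (a.1 = b.1 ∧ a.2 ≤ b.2)) := Iff.rfl

lemma gr_le_iff (a b : ℕ × ℕ) :
    grMonOrd.le a b ↔ (a.1 + a.2 < b.1 + b.2 ∨ (a.1 + a.2 = b.1 + b.2 ∧ a.2 ≤ b.2)) := Iff.rfl

/-- either order; exceptional case d = 2, s⁽¹⁾ = (2,0), s⁽²⁾ = (0,2),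
l = (1,3): existence of b ∈ L such that h_b = f⁽²⁾ − (b/v₁)·g generates u^l and
kills all later points of B(2t+1). -/
theorem exceptional_case_one_three
    (q : ℕ) (hq : IsPrimePow q)
    (F : Type) [Field F] [Fintype F] (hF : Fintype.card F = q)
    (L : Type) [Field L] [Algebra F L]
    (r₁ r₂ : ℕ) (hr₁ : 0 < r₁) (hr₂ : 0 < r₂) (hco : Nat.Coprime q (r₁ * r₂))
    (α₁ α₂ : L) (hα₁ : IsPrimitiveRoot α₁ r₁) (hα₂ : IsPrimitiveRoot α₂ r₂)
    (T : MonOrd) (hT : T = lexMonOrd ∨ T = grMonOrd)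
    (t : ℕ) (ht2 : 2 ≤ t) (ht4 : t ≤ 4) (htr1 : t ≤ r₁ / 2) (htr2 : t ≤ r₂ / 2)
    (e : Fin r₁ × Fin r₂ → F) (hω : wt e ≤ t) (τ : Fin r₁ × Fin r₂)
    (U : ℕ × ℕ → L) (hU : U = synTable α₁ α₂ τ e)
    (l : ℕ × ℕ) (hl : l ∈ frontF r₁ r₂ t) (hleq : l = (1, 3))
    (f₁ f₂ : (ℕ × ℕ) →₀ L) (s₁ s₂ : ℕ × ℕ)
    (hLP1 : IsLP T f₁ s₁) (hLP2 : IsLP T f₂ s₂)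
    (hstair1 : s₂.1 = 0) (hstair2 : s₁.2 = 0)
    (hstair3 : s₂.1 < s₁.1) (hstair4 : s₁.2 < s₂.2)
    (hs1 : s₁ = (2, 0)) (hs2 : s₂ = (0, 2))
    (hgen1 : ∀ k : ℕ × ℕ, s₁.1 ≤ k.1 → s₁.2 ≤ k.2 → T.lt k l → fApp U f₁ s₁ k = 0)
    (hgen2 : ∀ k : ℕ × ℕ, s₂.1 ≤ k.1 → s₂.2 ≤ k.2 → T.lt k l → fApp U f₂ s₂ k = 0)
    (hmin : ∀ (g : (ℕ × ℕ) →₀ L) (sg : ℕ × ℕ), IsLP T g sg →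
      sg.1 ≤ s₁.1 - 1 → sg.2 ≤ s₂.2 - 1 →
      ∃ k : ℕ × ℕ, sg.1 ≤ k.1 ∧ sg.2 ≤ k.2 ∧ T.lt k l ∧ fApp U g sg k ≠ 0)
    (g : (ℕ × ℕ) →₀ L) (sg k₁ : ℕ × ℕ) (hgLP : IsLP T g sg)
    (hk₁l : T.lt k₁ l)
    (hgpast : ∀ m : ℕ × ℕ, sg.1 ≤ m.1 → sg.2 ≤ m.2 → T.lt m k₁ → fApp U g sg m = 0)
    (hk₁LP : (k₁.1 - sg.1, k₁.2 - sg.2) = (s₁.1 - 1, s₂.2 - 1))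
    (v₁ : L) (hv₁ : fApp U g sg k₁ = v₁) (hv₁0 : v₁ ≠ 0) :
    ∃ b : L, ∃ sh : ℕ × ℕ,
      IsLP T (f₂ - (b / v₁) • g) sh ∧
      (∀ k : ℕ × ℕ, sh.1 ≤ k.1 → sh.2 ≤ k.2 → T.lt k l →
        fApp U (f₂ - (b / v₁) • g) sh k = 0) ∧
      (∀ k ∈ hypB r₁ r₂ (2 * t + 1), T.le l k →
        fApp U (f₂ - (b / v₁) • g) sh k = 0) := by
  classical
  subst hU hleq hs1 hs2
  -- t = 4
  have ht : t = 4 := by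
    obtain ⟨⟨_, _, h8, _, _⟩, _⟩ := hl
    norm_num at h8
    omega
  -- sg ⪯ k₁ and k₁ = sg + (1,1)
  have hsgk₁ : sg.1 ≤ k₁.1 ∧ sg.2 ≤ k₁.2 := by
    by_contra hcon
    rw [fApp, if_neg hcon] at hv₁
    exact hv₁0 hv₁.symm
  have hk₁ : k₁.1 = sg.1 + 1 ∧ k₁.2 = sg.2 + 1 := by
    have h := hk₁LP
    simp only [Prod.mk.injEq] at h
    norm_num at h
    omega
  -- order facts
  have horder : T.lt sg (0,2) ∧ T.lt (sg.1, sg.2) k₁ ∧ T.lt (sg.1+1, sg.2) k₁ ∧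
      T.lt (sg.1, sg.2+1) k₁ ∧ T.lt ((0:ℕ),(2:ℕ)) (1,3) ∧ T.lt ((1:ℕ),(2:ℕ)) (1,3) ∧
      T.lt ((0:ℕ),(3:ℕ)) (1,3) := by
    have hk := hk₁l
    rcases hT with rfl | rfl <;>
    · simp only [monOrd_lt_iff, lex_le_iff, gr_le_iff, ne_eq, Prod.ext_iff, Prod.mk.injEq, true_and, and_true] at hk ⊢
      omega
  set b := fApp (synTable α₁ α₂ τ e) f₂ (0,2) (1,3) with hb
  set c := b / v₁ with hcdef
  set h := f₂ - c • g with hh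
  -- leading power product of h
  have hgs₂ : g (0,2) = 0 := by
    by_contra hg0
    have hmem : ((0:ℕ),(2:ℕ)) ∈ g.support := Finsupp.mem_support_iff.2 hg0
    have hle := hgLP.2 _ hmem
    exact horder.1.2 (T.antisymm _ _ horder.1.1 hle)
  have hLPh : IsLP T h (0,2) := by
    constructor
    · rw [Finsupp.mem_support_iff]
      have hco : h (0,2) = f₂ (0,2) := by
        simp [hh, Finsupp.sub_apply, Finsupp.smul_apply, hgs₂]
      rw [hco]
      exact Finsupp.mem_support_iff.1 hLP2.1
    · intro m hm
      have hm' : h m ≠ 0 := Finsupp.mem_support_iff.1 hm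
      by_cases hf : f₂ m = 0
      · have hgm : g m ≠ 0 := by
          intro hg
          apply hm'
          simp [hh, Finsupp.sub_apply, Finsupp.smul_apply, hf, hg]
        exact T.trans _ _ _ (hgLP.2 _ (Finsupp.mem_support_iff.2 hgm)) horder.1.1
      · exact hLP2.2 _ (Finsupp.mem_support_iff.2 hf)
  -- the four sums for f₂ and g
  have hSf : ∀ m1 m2 : ℕ, fApp (synTable α₁ α₂ τ e) f₂ (0,2) (m1, m2+2)
      = ∑ p : Fin r₁ × Fin r₂, cc α₁ α₂ τ e p * (α₁ ^ (p.1:ℕ)) ^ m1 * (α₂ ^ (p.2:ℕ)) ^ m2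
        * polyEval f₂ (α₁ ^ (p.1:ℕ)) (α₂ ^ (p.2:ℕ)) := by
    intro m1 m2
    rw [fApp_synTable _ _ _ _ _ _ _ (by norm_num) (by norm_num)]
    norm_num
  have hSg : ∀ m1 m2 : ℕ, fApp (synTable α₁ α₂ τ e) g sg (sg.1+m1, sg.2+m2)
      = ∑ p : Fin r₁ × Fin r₂, cc α₁ α₂ τ e p * (α₁ ^ (p.1:ℕ)) ^ m1 * (α₂ ^ (p.2:ℕ)) ^ m2
        * polyEval g (α₁ ^ (p.1:ℕ)) (α₂ ^ (p.2:ℕ)) := by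
    intro m1 m2
    rw [fApp_synTable _ _ _ _ _ _ _ (by omega) (by omega)]
    norm_num
  have hfzero : ∀ m1 m2 : ℕ, T.lt ((m1:ℕ), m2+2) (1,3) →
      ∑ p : Fin r₁ × Fin r₂, cc α₁ α₂ τ e p * (α₁ ^ (p.1:ℕ)) ^ m1 * (α₂ ^ (p.2:ℕ)) ^ m2
        * polyEval f₂ (α₁ ^ (p.1:ℕ)) (α₂ ^ (p.2:ℕ)) = 0 := by
    intro m1 m2 hltm
    rw [← hSf m1 m2]
    exact hgen2 (m1, m2+2) (by norm_num) (by norm_num) hltm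
  have hgzero : ∀ m1 m2 : ℕ, T.lt (sg.1 + m1, sg.2 + m2) k₁ →
      ∑ p : Fin r₁ × Fin r₂, cc α₁ α₂ τ e p * (α₁ ^ (p.1:ℕ)) ^ m1 * (α₂ ^ (p.2:ℕ)) ^ m2
        * polyEval g (α₁ ^ (p.1:ℕ)) (α₂ ^ (p.2:ℕ)) = 0 := by
    intro m1 m2 hltm
    rw [← hSg m1 m2]
    exact hgpast _ (by omega) (by omega) hltm
  have hgone : ∑ p : Fin r₁ × Fin r₂, cc α₁ α₂ τ e p * (α₁ ^ (p.1:ℕ)) ^ 1 * (α₂ ^ (p.2:ℕ)) ^ 1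
      * polyEval g (α₁ ^ (p.1:ℕ)) (α₂ ^ (p.2:ℕ)) = v₁ := by
    rw [← hSg 1 1]
    have hkk : ((sg.1+1 : ℕ), (sg.2+1 : ℕ)) = k₁ := by
      rw [Prod.ext_iff]
      exact ⟨hk₁.1.symm, hk₁.2.symm⟩
    rw [hkk]
    exact hv₁
  have hfone : ∑ p : Fin r₁ × Fin r₂, cc α₁ α₂ τ e p * (α₁ ^ (p.1:ℕ)) ^ 1 * (α₂ ^ (p.2:ℕ)) ^ 1
      * polyEval f₂ (α₁ ^ (p.1:ℕ)) (α₂ ^ (p.2:ℕ)) = b := by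
    rw [← hSf 1 1]
  -- the four sums for h vanish
  have hS : ∀ m1 m2 : ℕ, m1 ≤ 1 → m2 ≤ 1 →
      ∑ p : Fin r₁ × Fin r₂, cc α₁ α₂ τ e p * (α₁ ^ (p.1:ℕ)) ^ m1 * (α₂ ^ (p.2:ℕ)) ^ m2
        * polyEval h (α₁ ^ (p.1:ℕ)) (α₂ ^ (p.2:ℕ)) = 0 := by
    intro m1 m2 hm1 hm2
    have expand : ∑ p : Fin r₁ × Fin r₂, cc α₁ α₂ τ e p * (α₁ ^ (p.1:ℕ)) ^ m1
          * (α₂ ^ (p.2:ℕ)) ^ m2 * polyEval h (α₁ ^ (p.1:ℕ)) (α₂ ^ (p.2:ℕ))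
        = (∑ p : Fin r₁ × Fin r₂, cc α₁ α₂ τ e p * (α₁ ^ (p.1:ℕ)) ^ m1 * (α₂ ^ (p.2:ℕ)) ^ m2
            * polyEval f₂ (α₁ ^ (p.1:ℕ)) (α₂ ^ (p.2:ℕ)))
          - c * ∑ p : Fin r₁ × Fin r₂, cc α₁ α₂ τ e p * (α₁ ^ (p.1:ℕ)) ^ m1 * (α₂ ^ (p.2:ℕ)) ^ m2
            * polyEval g (α₁ ^ (p.1:ℕ)) (α₂ ^ (p.2:ℕ)) := by
      rw [Finset.mul_sum, ← Finset.sum_sub_distrib]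
      refine Finset.sum_congr rfl fun p _ => ?_
      rw [hh, polyEval_sub_smul]
      ring
    rw [expand]
    interval_cases m1 <;> interval_cases m2
    · rw [hfzero 0 0 horder.2.2.2.2.1, hgzero 0 0 (by simpa using horder.2.1), mul_zero, sub_zero]
    · rw [hfzero 0 1 horder.2.2.2.2.2.2, hgzero 0 1 horder.2.2.2.1, mul_zero, sub_zero]
    · rw [hfzero 1 0 horder.2.2.2.2.2.1, hgzero 1 0 (by simpa using horder.2.2.1), mul_zero, sub_zero]
    · rw [hfone, hgone, hcdef, div_mul_cancel₀ _ hv₁0, sub_self]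
  -- linear independence from hmin
  have hinj : ∀ a0 a1 a2 a3 : L,
      (∀ p : Fin r₁ × Fin r₂, e p ≠ 0 →
        a0 + a1 * α₁ ^ (p.1:ℕ) + a2 * α₂ ^ (p.2:ℕ) + a3 * (α₁ ^ (p.1:ℕ) * α₂ ^ (p.2:ℕ)) = 0) →
      a0 = 0 ∧ a1 = 0 ∧ a2 = 0 ∧ a3 = 0 := by
    intro a0 a1 a2 a3 hvan
    by_contra hcon
    set fa : (ℕ × ℕ) →₀ L := Finsupp.single (0,0) a0 + Finsupp.single (1,0) a1
      + Finsupp.single (0,1) a2 + Finsupp.single (1,1) a3 with hfa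
    have hc0 : fa (0,0) = a0 := by simp [hfa, Finsupp.single_apply, Prod.ext_iff]
    have hc1 : fa (1,0) = a1 := by simp [hfa, Finsupp.single_apply, Prod.ext_iff]
    have hc2 : fa (0,1) = a2 := by simp [hfa, Finsupp.single_apply, Prod.ext_iff]
    have hc3 : fa (1,1) = a3 := by simp [hfa, Finsupp.single_apply, Prod.ext_iff]
    have hfane : fa ≠ 0 := by
      intro h0
      rw [h0] at hc0 hc1 hc2 hc3
      simp only [Finsupp.coe_zero, Pi.zero_apply] at hc0 hc1 hc2 hc3
      exact hcon ⟨hc0.symm, hc1.symm, hc2.symm, hc3.symm⟩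
    have hsupp : ∀ m ∈ fa.support, m.1 ≤ 1 ∧ m.2 ≤ 1 := by
      intro m hm
      by_contra hcm
      apply Finsupp.mem_support_iff.1 hm
      have h1 : ((0,0) : ℕ × ℕ) ≠ m := by
        intro he; apply hcm; rw [← he]; exact ⟨by norm_num, by norm_num⟩
      have h2 : ((1,0) : ℕ × ℕ) ≠ m := by
        intro he; apply hcm; rw [← he]; exact ⟨by norm_num, by norm_num⟩
      have h3 : ((0,1) : ℕ × ℕ) ≠ m := by
        intro he; apply hcm; rw [← he]; exact ⟨by norm_num, by norm_num⟩
      have h4 : ((1,1) : ℕ × ℕ) ≠ m := by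
        intro he; apply hcm; rw [← he]; exact ⟨by norm_num, by norm_num⟩
      have h1' : ((0 : ℕ × ℕ)) ≠ m := by exact h1
      have h4' : ((1 : ℕ × ℕ)) ≠ m := by exact h4
      simp [hfa, Finsupp.single_apply, h1, h2, h3, h4, h1', h4']
    have hev : ∀ x y : L, polyEval fa x y = a0 + a1 * x + a2 * y + a3 * (x * y) := by
      intro x y
      rw [hfa, polyEval_add, polyEval_add, polyEval_add, polyEval_single, polyEval_single,
        polyEval_single, polyEval_single]
      norm_num
      ring
    obtain ⟨sg', hsg'mem, hsg'max⟩ := exists_T_max T fa.support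
      (Finsupp.support_nonempty_iff.2 hfane)
    obtain ⟨k, hk1, hk2, hkl, hkne⟩ := hmin fa sg' ⟨hsg'mem, hsg'max⟩
      (by have := (hsupp _ hsg'mem).1; norm_num; omega)
      (by have := (hsupp _ hsg'mem).2; norm_num; omega)
    apply hkne
    rw [fApp_synTable _ _ _ _ _ _ _ hk1 hk2]
    refine Finset.sum_eq_zero fun p _ => ?_
    by_cases hep : e p = 0
    · simp [cc, hep]
    · rw [hev, hvan p hep, mul_zero]
  -- the error support
  set E : Finset (Fin r₁ × Fin r₂) := Finset.univ.filter (fun p => e p ≠ 0) with hE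
  have hcardE : E.card ≤ 4 := by
    have hwt : wt e = E.card := by
      rw [wt, show {p | e p ≠ 0} = (E : Set (Fin r₁ × Fin r₂)) from by ext p; simp [hE]]
      exact Set.ncard_coe_finset E
    omega
  -- linear independence of the four monomial functions on E
  have li : LinearIndependent L
      (![(fun _ : ↥E => (1:L)),
         (fun p : ↥E => α₁ ^ ((p : Fin r₁ × Fin r₂).1 : ℕ)),
         (fun p : ↥E => α₂ ^ ((p : Fin r₁ × Fin r₂).2 : ℕ)),
         (fun p : ↥E => α₁ ^ ((p : Fin r₁ × Fin r₂).1 : ℕ) * α₂ ^ ((p : Fin r₁ × Fin r₂).2 : ℕ))]) := by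
    rw [Fintype.linearIndependent_iff]
    intro gc hgc
    have hvan : ∀ p : Fin r₁ × Fin r₂, e p ≠ 0 →
        gc 0 + gc 1 * α₁ ^ (p.1:ℕ) + gc 2 * α₂ ^ (p.2:ℕ)
          + gc 3 * (α₁ ^ (p.1:ℕ) * α₂ ^ (p.2:ℕ)) = 0 := by
      intro p hp
      have hmemE : p ∈ E := by simp [hE, hp]
      have hgc' := congrFun hgc (⟨p, hmemE⟩ : ↥E)
      simpa [Fin.sum_univ_four, mul_comm] using hgc'
    obtain ⟨h0, h1, h2, h3⟩ := hinj _ _ _ _ hvan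
    intro i
    fin_cases i <;> assumption
  have hfr : Module.finrank L (↥E → L) = E.card := by
    rw [Module.finrank_pi]
    exact Fintype.card_coe E
  have h4le : 4 ≤ E.card := by
    have hle := li.fintype_card_le_finrank
    rwa [hfr, Fintype.card_fin] at hle
  have hspan := li.span_eq_top_of_card_eq_finrank
    (by rw [hfr, Fintype.card_fin]; omega)
  -- the functional  u ↦ ∑ u p * D p  vanishes
  set D : Fin r₁ × Fin r₂ → L := fun p =>
    cc α₁ α₂ τ e p * polyEval h (α₁ ^ (p.1:ℕ)) (α₂ ^ (p.2:ℕ)) with hD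
  have hDoff : ∀ p, e p = 0 → D p = 0 := by
    intro p hp; simp [hD, cc, hp]
  set ℓ : (↥E → L) →ₗ[L] L :=
    { toFun := fun u => ∑ p : ↥E, u p * D (p : Fin r₁ × Fin r₂),
      map_add' := by
        intro u w
        simp [add_mul, Finset.sum_add_distrib],
      map_smul' := by
        intro a u
        simp [smul_eq_mul, mul_assoc, Finset.mul_sum] } with hℓ
  have hrestrict : ∀ m1 m2 : ℕ, m1 ≤ 1 → m2 ≤ 1 →
      ∑ p : ↥E, (α₁ ^ ((p : Fin r₁ × Fin r₂).1:ℕ)) ^ m1 * (α₂ ^ ((p : Fin r₁ × Fin r₂).2:ℕ)) ^ m2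
        * D (p : Fin r₁ × Fin r₂) = 0 := by
    intro m1 m2 hm1 hm2
    have hsub : ∑ p ∈ E, (α₁ ^ (p.1:ℕ)) ^ m1 * (α₂ ^ (p.2:ℕ)) ^ m2 * D p
        = ∑ p : Fin r₁ × Fin r₂, (α₁ ^ (p.1:ℕ)) ^ m1 * (α₂ ^ (p.2:ℕ)) ^ m2 * D p := by
      refine Finset.sum_subset (Finset.subset_univ E) fun p _ hp => ?_
      have hep : e p = 0 := by
        by_contra hep
        exact hp (by simp [hE, hep])
      rw [hDoff p hep, mul_zero]
    rw [Finset.sum_coe_sort E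
        (fun p => (α₁ ^ (p.1:ℕ)) ^ m1 * (α₂ ^ (p.2:ℕ)) ^ m2 * D p), hsub]
    rw [← hS m1 m2 hm1 hm2]
    refine Finset.sum_congr rfl fun p _ => ?_
    simp only [hD]
    ring
  have hker : ∀ i : Fin 4, ℓ (![(fun _ : ↥E => (1:L)),
      (fun p : ↥E => α₁ ^ ((p : Fin r₁ × Fin r₂).1 : ℕ)),
      (fun p : ↥E => α₂ ^ ((p : Fin r₁ × Fin r₂).2 : ℕ)),
      (fun p : ↥E => α₁ ^ ((p : Fin r₁ × Fin r₂).1 : ℕ) * α₂ ^ ((p : Fin r₁ × Fin r₂).2 : ℕ))] i)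
      = 0 := by
    intro i
    fin_cases i
    · have := hrestrict 0 0 (by norm_num) (by norm_num)
      simpa [hℓ] using this
    · have := hrestrict 1 0 (by norm_num) (by norm_num)
      simpa [hℓ] using this
    · have := hrestrict 0 1 (by norm_num) (by norm_num)
      simpa [hℓ] using this
    · have := hrestrict 1 1 (by norm_num) (by norm_num)
      simpa [hℓ] using this
  have hℓzero : ∀ u : ↥E → L, ℓ u = 0 := by
    intro u
    have hle : Submodule.span L (Set.range (![(fun _ : ↥E => (1:L)),
        (fun p : ↥E => α₁ ^ ((p : Fin r₁ × Fin r₂).1 : ℕ)),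
        (fun p : ↥E => α₂ ^ ((p : Fin r₁ × Fin r₂).2 : ℕ)),
        (fun p : ↥E => α₁ ^ ((p : Fin r₁ × Fin r₂).1 : ℕ) * α₂ ^ ((p : Fin r₁ × Fin r₂).2 : ℕ))]))
        ≤ LinearMap.ker ℓ := by
      rw [Submodule.span_le]
      rintro _ ⟨i, rfl⟩
      exact LinearMap.mem_ker.2 (hker i)
    have hu : u ∈ LinearMap.ker ℓ := hle (hspan ▸ Submodule.mem_top)
    exact LinearMap.mem_ker.1 hu
  have hDzero : ∀ p : Fin r₁ × Fin r₂, D p = 0 := by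
    intro p
    by_cases hp : e p = 0
    · exact hDoff p hp
    · have hpE : p ∈ E := by simp [hE, hp]
      have hz := hℓzero (Pi.single (⟨p, hpE⟩ : ↥E) 1)
      rw [hℓ] at hz
      simp only [LinearMap.coe_mk, AddHom.coe_mk] at hz
      change ∑ q : ↥E, (Pi.single (⟨p, hpE⟩ : ↥E) (1:L) : ↥E → L) q * D (q : Fin r₁ × Fin r₂) = 0 at hz
      rwa [Finset.sum_eq_single (⟨p, hpE⟩ : ↥E)
        (fun q _ hq => by rw [Pi.single_apply, if_neg hq, zero_mul])
        (fun hq => absurd (Finset.mem_univ _) hq), Pi.single_apply, if_pos rfl, one_mul] at hz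
  -- everything vanishes
  have hfinal : ∀ n : ℕ × ℕ, fApp (synTable α₁ α₂ τ e) h (0,2) n = 0 := by
    intro n
    by_cases hn : ((0:ℕ),(2:ℕ)).1 ≤ n.1 ∧ ((0:ℕ),(2:ℕ)).2 ≤ n.2
    · rw [fApp_synTable _ _ _ _ _ _ _ hn.1 hn.2]
      refine Finset.sum_eq_zero fun p _ => ?_
      have hz := hDzero p
      simp only [hD] at hz
      calc cc α₁ α₂ τ e p * (α₁ ^ (p.1:ℕ)) ^ (n.1 - ((0:ℕ),(2:ℕ)).1)
            * (α₂ ^ (p.2:ℕ)) ^ (n.2 - ((0:ℕ),(2:ℕ)).2)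
            * polyEval h (α₁ ^ (p.1:ℕ)) (α₂ ^ (p.2:ℕ))
          = (α₁ ^ (p.1:ℕ)) ^ (n.1 - ((0:ℕ),(2:ℕ)).1) * (α₂ ^ (p.2:ℕ)) ^ (n.2 - ((0:ℕ),(2:ℕ)).2)
            * (cc α₁ α₂ τ e p * polyEval h (α₁ ^ (p.1:ℕ)) (α₂ ^ (p.2:ℕ))) := by ring
        _ = 0 := by rw [hz, mul_zero]
    · rw [fApp, if_neg hn]
  exact ⟨b, (0,2), hLPh, fun k _ _ _ => hfinal k, fun k _ _ => hfinal k⟩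
end

section
/- Let ≤_T be either the lexicographic order with X₁ > X₂ or the graded order with X₂ > X₁. Let 1 ≤ t ≤ 4 with t ≤ ⌊r₁/2⌋ and t ≤ ⌊r₂/2⌋, let e ∈ 𝔽(r₁,r₂) with ω(e) ≤ t, let τ ∈ 𝓘, and let U be the syndrome table afforded by τ and e. Suppose that either (a) l = (0, 2t−1) and F = {f^(1), f^(2)} is a minimal set of polynomials for u^l with defining points s^(1), s^(2) satisfying s^(2)_2 = t, or (b) l = (2t−1, 0) and F = {f^(1), f^(2)} is a minimal set of polynomials for u^l with defining points s^(1), s^(2) satisfying s^(1)_1 = t. Let (g, k) be an auxiliary polynomial for index 1 with v = g[U]_k ≠ 0. Then there exists b ∈ L such that the polynomial h_b, defined as h_b = f^(2) − (b/v)·g in case (a) and h_b = f^(1) − (b/v)·g in case (b), generates u^l and satisfies h_b[U]_{k'} = 0 for every k' ∈ B(2t+1) with l ≤_T k'. -/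
-- helpers
lemma MonOrd.lt_add_right (T : MonOrd) (a b c : ℕ × ℕ) (h : T.lt a b) : T.lt (a + c) (b + c) := by
  refine ⟨T.add_right a b c h.1, fun he => h.2 ?_⟩
  obtain ⟨a1,a2⟩ := a; obtain ⟨b1,b2⟩ := b; obtain ⟨c1,c2⟩ := c
  simp only [Prod.mk_add_mk, Prod.mk.injEq] at he ⊢; omega

lemma MonOrd.lt_of_add_right (T : MonOrd) (a b c : ℕ × ℕ) (h : T.lt (a + c) (b + c)) : T.lt a b := by
  have hne : a ≠ b := fun he => h.2 (by rw [he])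
  rcases T.total a b with h' | h'
  · exact ⟨h', hne⟩
  · exact absurd (T.antisymm _ _ h.1 (T.add_right b a c h')) h.2

lemma MonOrd.exists_max (T : MonOrd) (s : Finset (ℕ × ℕ)) (hs : s.Nonempty) :
    ∃ a ∈ s, ∀ b ∈ s, T.le b a := by
  classical
  induction s using Finset.induction_on with
  | empty => exact absurd hs (by simp)
  | @insert x s hx ih =>
    rcases s.eq_empty_or_nonempty with rfl | hne
    · exact ⟨x, by simp, by simpa using T.refl x⟩
    · obtain ⟨a, ha, hmax⟩ := ih hne
      rcases T.total x a with h | h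
      · exact ⟨a, Finset.mem_insert_of_mem ha, by
          intro b hb; rcases Finset.mem_insert.1 hb with rfl | hb
          · exact h
          · exact hmax b hb⟩
      · exact ⟨x, Finset.mem_insert_self x s, by
          intro b hb; rcases Finset.mem_insert.1 hb with rfl | hb
          · exact T.refl b
          · exact T.trans _ _ _ (hmax b hb) h⟩

-- sum of f m * U(...) over any superset of support is the same
lemma sum_support_superset {L : Type} [Field L] (f : (ℕ × ℕ) →₀ L) (S : Finset (ℕ × ℕ))
    (hS : f.support ⊆ S) (F : (ℕ × ℕ) → L) :
    ∑ m ∈ S, f m * F m = ∑ m ∈ f.support, f m * F m := by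
  refine (Finset.sum_subset hS ?_).symm
  intro m _ hm
  rw [Finsupp.notMem_support_iff.1 hm, zero_mul]

lemma fApp_sub_smul {L : Type} [Field L] (U : ℕ × ℕ → L) (f g : (ℕ × ℕ) →₀ L) (c : L)
    (s sg n : ℕ × ℕ) (h1 : s.1 ≤ n.1) (h2 : s.2 ≤ n.2) :
    fApp U (f - c • g) s n
      = fApp U f s n - c * fApp U g sg (n.1 - s.1 + sg.1, n.2 - s.2 + sg.2) := by
  have hc1 : sg.1 ≤ n.1 - s.1 + sg.1 := by omega
  have hc2 : sg.2 ≤ n.2 - s.2 + sg.2 := by omega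
  rw [fApp, fApp, fApp, if_pos ⟨h1, h2⟩, if_pos ⟨h1, h2⟩, if_pos ⟨hc1, hc2⟩]
  have hgarg : ∀ m : ℕ × ℕ, (m.1 + (n.1 - s.1 + sg.1) - sg.1, m.2 + (n.2 - s.2 + sg.2) - sg.2)
      = (m.1 + n.1 - s.1, m.2 + n.2 - s.2) := by
    intro m; obtain ⟨m1, m2⟩ := m; simp only [Prod.mk.injEq]; omega
  have hgsum : ∑ m ∈ g.support, g m * U (m.1 + (n.1 - s.1 + sg.1) - sg.1,
        m.2 + (n.2 - s.2 + sg.2) - sg.2)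
      = ∑ m ∈ g.support, g m * U (m.1 + n.1 - s.1, m.2 + n.2 - s.2) := by
    refine Finset.sum_congr rfl fun m _ => by rw [hgarg m]
  rw [hgsum]
  set Fm : (ℕ × ℕ) → L := fun m => U (m.1 + n.1 - s.1, m.2 + n.2 - s.2) with hFm
  have hsub : (f - c • g).support ⊆ f.support ∪ g.support := by
    intro m hm
    simp only [Finsupp.mem_support_iff, Finsupp.sub_apply, Finsupp.smul_apply, smul_eq_mul] at hm
    simp only [Finset.mem_union, Finsupp.mem_support_iff]
    by_contra hcon
    push_neg at hcon
    rw [hcon.1, hcon.2] at hm; simp at hm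
  calc ∑ m ∈ (f - c • g).support, (f - c • g) m * Fm m
      = ∑ m ∈ f.support ∪ g.support, (f - c • g) m * Fm m :=
        (sum_support_superset _ _ hsub Fm).symm
    _ = ∑ m ∈ f.support ∪ g.support, (f m * Fm m - c * (g m * Fm m)) := by
        refine Finset.sum_congr rfl fun m _ => ?_
        simp only [Finsupp.sub_apply, Finsupp.smul_apply, smul_eq_mul]; ring
    _ = ∑ m ∈ f.support ∪ g.support, f m * Fm m
          - c * ∑ m ∈ f.support ∪ g.support, g m * Fm m := by
        rw [Finset.sum_sub_distrib, Finset.mul_sum]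
    _ = ∑ m ∈ f.support, f m * Fm m - c * ∑ m ∈ g.support, g m * Fm m := by
        rw [sum_support_superset f _ Finset.subset_union_left Fm,
            sum_support_superset g _ Finset.subset_union_right Fm]

lemma vanish_of_roots {F L : Type} [Field F] [Field L] [Algebra F L] {r₁ r₂ : ℕ}
    (α₁ α₂ : L) (τ : Fin r₁ × Fin r₂) (e : Fin r₁ × Fin r₂ → F) (g : (ℕ × ℕ) →₀ L)
    (hz : ∀ p : Fin r₁ × Fin r₂, e p ≠ 0 →
      polyEval g (α₁ ^ (p.1 : ℕ)) (α₂ ^ (p.2 : ℕ)) = 0)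
    (s n : ℕ × ℕ) : fApp (synTable α₁ α₂ τ e) g s n = 0 := by
  rw [fApp]
  split_ifs with h
  · obtain ⟨h1, h2⟩ := h
    have key : ∀ m ∈ g.support, g m * synTable α₁ α₂ τ e (m.1 + n.1 - s.1, m.2 + n.2 - s.2)
        = ∑ p : Fin r₁ × Fin r₂,
            (algebraMap F L (e p) * (α₁ ^ (p.1 : ℕ)) ^ ((τ.1 : ℕ) + (n.1 - s.1))
              * (α₂ ^ (p.2 : ℕ)) ^ ((τ.2 : ℕ) + (n.2 - s.2)))
            * (g m * (α₁ ^ (p.1 : ℕ)) ^ m.1 * (α₂ ^ (p.2 : ℕ)) ^ m.2) := by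
      intro m _
      rw [synTable, Finset.mul_sum]
      refine Finset.sum_congr rfl fun p _ => ?_
      have e1 : (α₁ ^ ((τ.1 : ℕ) + (m.1 + n.1 - s.1))) ^ (p.1 : ℕ)
          = (α₁ ^ (p.1 : ℕ)) ^ ((τ.1 : ℕ) + (n.1 - s.1)) * (α₁ ^ (p.1 : ℕ)) ^ m.1 := by
        rw [← pow_mul, ← pow_mul, ← pow_mul, ← pow_add]
        congr 1
        have : (τ.1 : ℕ) + (m.1 + n.1 - s.1) = ((τ.1 : ℕ) + (n.1 - s.1)) + m.1 := by omega
        rw [this]; ring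
      have e2 : (α₂ ^ ((τ.2 : ℕ) + (m.2 + n.2 - s.2))) ^ (p.2 : ℕ)
          = (α₂ ^ (p.2 : ℕ)) ^ ((τ.2 : ℕ) + (n.2 - s.2)) * (α₂ ^ (p.2 : ℕ)) ^ m.2 := by
        rw [← pow_mul, ← pow_mul, ← pow_mul, ← pow_add]
        congr 1
        have : (τ.2 : ℕ) + (m.2 + n.2 - s.2) = ((τ.2 : ℕ) + (n.2 - s.2)) + m.2 := by omega
        rw [this]; ring
      rw [e1, e2]; ring
    rw [Finset.sum_congr rfl key, Finset.sum_comm]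
    refine Finset.sum_eq_zero fun p _ => ?_
    rw [← Finset.mul_sum]
    rcases eq_or_ne (e p) 0 with hep | hep
    · rw [hep]; simp
    · exact mul_eq_zero_of_right _ (hz p hep)
  · rfl

noncomputable def emb2 : ℕ ↪ ℕ × ℕ := ⟨fun j => (0, j), fun a b h => by simpa using h⟩

noncomputable def toF2 {L : Type} [Field L] (Q : Polynomial L) : (ℕ × ℕ) →₀ L :=
  Finsupp.embDomain emb2 Q.toFinsupp.coeff

lemma toF2_support {L : Type} [Field L] (Q : Polynomial L) :
    (toF2 Q).support = Q.support.map emb2 := by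
  rw [toF2, Finsupp.support_embDomain]; rfl

lemma polyEval_toF2 {L : Type} [Field L] (Q : Polynomial L) (x y : L) :
    polyEval (toF2 Q) x y = Q.eval y := by
  rw [polyEval, toF2_support, Finset.sum_map, Polynomial.eval_eq_sum, Polynomial.sum_def]
  refine Finset.sum_congr rfl fun j hj => ?_
  rw [toF2, Finsupp.embDomain_apply_self]
  show Q.coeff j * x ^ 0 * y ^ j = Q.coeff j * y ^ j
  ring

lemma polyEval_sub {L : Type} [Field L] (a b : (ℕ × ℕ) →₀ L) (x y : L) :
    polyEval (a - b) x y = polyEval a x y - polyEval b x y := by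
  show Finsupp.sum (a - b) (fun m c => c * x ^ m.1 * y ^ m.2)
    = Finsupp.sum a (fun m c => c * x ^ m.1 * y ^ m.2)
      - Finsupp.sum b (fun m c => c * x ^ m.1 * y ^ m.2)
  exact Finsupp.sum_sub_index fun m b₁ b₂ => by ring

lemma polyEval_single_one_zero {L : Type} [Field L] (x y : L) :
    polyEval (Finsupp.single ((1 : ℕ), (0 : ℕ)) (1 : L)) x y = x := by
  show Finsupp.sum (Finsupp.single ((1:ℕ),(0:ℕ)) (1:L)) (fun m c => c * x ^ m.1 * y ^ m.2) = x
  rw [Finsupp.sum_single_index (by simp)]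
  simp

/-- Construction: a nonzero polynomial with support in the box {0,1} × {0,…,t-1}
vanishing on any set of at most `t` points. -/
lemma construct_locator {L : Type} [Field L] (t : ℕ) (ht : 1 ≤ t)
    (S : Finset (L × L)) (hS : S.card ≤ t) :
    ∃ f : (ℕ × ℕ) →₀ L, f.support.Nonempty ∧
      (∀ m ∈ f.support, m.1 ≤ 1 ∧ m.2 ≤ t - 1) ∧
      (∀ p ∈ S, polyEval f p.1 p.2 = 0) := by
  classical
  set Y : Finset L := S.image Prod.snd with hY
  by_cases hYc : Y.card ≤ t - 1
  · -- univariate in y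
    set Q : Polynomial L := ∏ c ∈ Y, (Polynomial.X - Polynomial.C c) with hQ
    have hmonic : Q.Monic := Polynomial.monic_prod_of_monic _ _ fun c _ =>
      Polynomial.monic_X_sub_C c
    have hdeg : Q.natDegree = Y.card := by
      rw [hQ, Polynomial.natDegree_prod _ _ fun c _ => Polynomial.X_sub_C_ne_zero c]
      simp [Polynomial.natDegree_X_sub_C]
    refine ⟨toF2 Q, ?_, ?_, ?_⟩
    · refine ⟨(0, Q.natDegree), ?_⟩
      rw [toF2_support, Finset.mem_map]
      exact ⟨Q.natDegree, by
        simp only [Polynomial.mem_support_iff]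
        rw [hmonic.coeff_natDegree]; exact one_ne_zero, rfl⟩
    · intro m hm
      rw [toF2_support, Finset.mem_map] at hm
      obtain ⟨j, hj, rfl⟩ := hm
      have : j ≤ Q.natDegree := Polynomial.le_natDegree_of_mem_supp j hj
      constructor
      · show (0 : ℕ) ≤ 1; omega
      · show j ≤ t - 1; omega
    · intro p hp
      rw [polyEval_toF2]
      have : p.2 ∈ Y := Finset.mem_image_of_mem Prod.snd hp
      rw [hQ]
      simp only [Polynomial.eval_prod, Polynomial.eval_sub, Polynomial.eval_X,
        Polynomial.eval_C]
      exact Finset.prod_eq_zero this (by ring)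
  · -- |Y| = t, snd injective on S, interpolate
    have hle : Y.card ≤ S.card := by
      rw [hY]; exact Finset.card_image_le
    have hYt : Y.card = t := by omega
    have hSt : S.card = t := by omega
    have himg : (S.image Prod.snd).card = S.card := by rw [← hY]; omega
    have hinj : Set.InjOn Prod.snd (S : Set (L × L)) := Finset.card_image_iff.1 himg
    set P : Polynomial L := Lagrange.interpolate S Prod.snd Prod.fst with hP
    have hdegP : P.degree < S.card := Lagrange.degree_interpolate_lt _ hinj
    have hPdeg : ∀ j ∈ P.support, j ≤ t - 1 := by
      intro j hj
      have h1 : (j : WithBot ℕ) ≤ P.degree := Polynomial.le_degree_of_mem_supp j hj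
      have h2 : (j : WithBot ℕ) < (S.card : WithBot ℕ) := lt_of_le_of_lt h1 hdegP
      have : j < S.card := by exact_mod_cast h2
      omega
    refine ⟨Finsupp.single (1, 0) 1 - toF2 P, ?_, ?_, ?_⟩
    · refine ⟨(1, 0), Finsupp.mem_support_iff.2 ?_⟩
      rw [Finsupp.sub_apply, Finsupp.single_eq_same]
      have : toF2 P (1, 0) = 0 := by
        rw [toF2]
        refine Finsupp.embDomain_notin_range _ _ _ ?_
        rintro ⟨j, hj⟩
        simp only [emb2, Function.Embedding.coeFn_mk, Prod.mk.injEq] at hj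
        exact absurd (congrArg Prod.fst hj) (by show (0:ℕ) ≠ 1; omega)
      rw [this, sub_zero]; exact one_ne_zero
    · intro m hm
      have := Finsupp.support_sub hm
      rcases Finset.mem_union.1 this with h | h
      · have := Finsupp.support_single_subset h
        simp only [Finset.mem_singleton] at this
        subst this
        exact ⟨le_refl 1, by omega⟩
      · rw [toF2_support, Finset.mem_map] at h
        obtain ⟨j, hj, rfl⟩ := h
        exact ⟨by show (0:ℕ) ≤ 1; omega, hPdeg j hj⟩
    · intro p hp
      rw [polyEval_sub, polyEval_single_one_zero, polyEval_toF2]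
      have := Lagrange.eval_interpolate_at_node (r := Prod.fst) hinj hp
      rw [hP, this]
      ring

noncomputable def embSwap : (ℕ × ℕ) ↪ (ℕ × ℕ) := ⟨Prod.swap, Prod.swap_injective⟩

lemma polyEval_embSwap {L : Type} [Field L] (f : (ℕ × ℕ) →₀ L) (x y : L) :
    polyEval (Finsupp.embDomain embSwap f) x y = polyEval f y x := by
  rw [polyEval, polyEval, Finsupp.support_embDomain, Finset.sum_map]
  refine Finset.sum_congr rfl fun m _ => ?_
  rw [Finsupp.embDomain_apply_self]
  show f m * x ^ m.2 * y ^ m.1 = f m * y ^ m.1 * x ^ m.2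
  ring

lemma construct_locator' {L : Type} [Field L] (t : ℕ) (ht : 1 ≤ t)
    (S : Finset (L × L)) (hS : S.card ≤ t) :
    ∃ f : (ℕ × ℕ) →₀ L, f.support.Nonempty ∧
      (∀ m ∈ f.support, m.1 ≤ t - 1 ∧ m.2 ≤ 1) ∧
      (∀ p ∈ S, polyEval f p.1 p.2 = 0) := by
  classical
  obtain ⟨f, hne, hbox, hvan⟩ := construct_locator t ht (S.image Prod.swap)
    (le_trans Finset.card_image_le hS)
  refine ⟨Finsupp.embDomain embSwap f, ?_, ?_, ?_⟩
  · obtain ⟨m, hm⟩ := hne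
    exact ⟨embSwap m, by rw [Finsupp.support_embDomain]; exact Finset.mem_map_of_mem _ hm⟩
  · intro m hm
    rw [Finsupp.support_embDomain, Finset.mem_map] at hm
    obtain ⟨m', hm', rfl⟩ := hm
    obtain ⟨h1, h2⟩ := hbox m' hm'
    exact ⟨h2, h1⟩
  · intro p hp
    rw [polyEval_embSwap]
    exact hvan p.swap (Finset.mem_image_of_mem _ hp)


/-- either order; exceptional cases at the last points of the axes:
for l = (0,2t−1) with s⁽²⁾₂ = t (case a) or l = (2t−1,0) with s⁽¹⁾₁ = t (case b),
there is b ∈ L such that h_b (= f⁽²⁾ − (b/v)·g in case a, f⁽¹⁾ − (b/v)·g in case b)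
generates u^l and kills all later points of B(2t+1). -/
theorem exceptional_case_axes
    (q : ℕ) (hq : IsPrimePow q)
    (F : Type) [Field F] [Fintype F] (hF : Fintype.card F = q)
    (L : Type) [Field L] [Algebra F L]
    (r₁ r₂ : ℕ) (hr₁ : 0 < r₁) (hr₂ : 0 < r₂) (hco : Nat.Coprime q (r₁ * r₂))
    (α₁ α₂ : L) (hα₁ : IsPrimitiveRoot α₁ r₁) (hα₂ : IsPrimitiveRoot α₂ r₂)
    (T : MonOrd) (hT : T = lexMonOrd ∨ T = grMonOrd)
    (t : ℕ) (ht1 : 1 ≤ t) (ht4 : t ≤ 4) (htr1 : t ≤ r₁ / 2) (htr2 : t ≤ r₂ / 2)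
    (e : Fin r₁ × Fin r₂ → F) (hω : wt e ≤ t) (τ : Fin r₁ × Fin r₂)
    (U : ℕ × ℕ → L) (hU : U = synTable α₁ α₂ τ e)
    (l : ℕ × ℕ)
    (f₁ f₂ : (ℕ × ℕ) →₀ L) (s₁ s₂ : ℕ × ℕ)
    (hLP1 : IsLP T f₁ s₁) (hLP2 : IsLP T f₂ s₂)
    (hstair1 : s₂.1 = 0) (hstair2 : s₁.2 = 0)
    (hstair3 : s₂.1 < s₁.1) (hstair4 : s₁.2 < s₂.2)
    (hcase : (l = (0, 2 * t - 1) ∧ s₂.2 = t) ∨ (l = (2 * t - 1, 0) ∧ s₁.1 = t))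
    (hgen1 : ∀ k : ℕ × ℕ, s₁.1 ≤ k.1 → s₁.2 ≤ k.2 → T.lt k l → fApp U f₁ s₁ k = 0)
    (hgen2 : ∀ k : ℕ × ℕ, s₂.1 ≤ k.1 → s₂.2 ≤ k.2 → T.lt k l → fApp U f₂ s₂ k = 0)
    (hmin : ∀ (g : (ℕ × ℕ) →₀ L) (sg : ℕ × ℕ), IsLP T g sg →
      sg.1 ≤ s₁.1 - 1 → sg.2 ≤ s₂.2 - 1 →
      ∃ k : ℕ × ℕ, sg.1 ≤ k.1 ∧ sg.2 ≤ k.2 ∧ T.lt k l ∧ fApp U g sg k ≠ 0)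
    (g : (ℕ × ℕ) →₀ L) (sg k₀ : ℕ × ℕ) (hgLP : IsLP T g sg)
    (hk₀l : T.lt k₀ l)
    (hgpast : ∀ m : ℕ × ℕ, sg.1 ≤ m.1 → sg.2 ≤ m.2 → T.lt m k₀ → fApp U g sg m = 0)
    (hk₀LP : (k₀.1 - sg.1, k₀.2 - sg.2) = (s₁.1 - 1, s₂.2 - 1))
    (v : L) (hv : fApp U g sg k₀ = v) (hv0 : v ≠ 0) :
    (l = (0, 2 * t - 1) ∧ s₂.2 = t →
      ∃ b : L, ∃ sh : ℕ × ℕ,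
        IsLP T (f₂ - (b / v) • g) sh ∧
        (∀ k : ℕ × ℕ, sh.1 ≤ k.1 → sh.2 ≤ k.2 → T.lt k l →
          fApp U (f₂ - (b / v) • g) sh k = 0) ∧
        (∀ k ∈ hypB r₁ r₂ (2 * t + 1), T.le l k →
          fApp U (f₂ - (b / v) • g) sh k = 0)) ∧
    (l = (2 * t - 1, 0) ∧ s₁.1 = t →
      ∃ b : L, ∃ sh : ℕ × ℕ,
        IsLP T (f₁ - (b / v) • g) sh ∧
        (∀ k : ℕ × ℕ, sh.1 ≤ k.1 → sh.2 ≤ k.2 → T.lt k l →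
          fApp U (f₁ - (b / v) • g) sh k = 0) ∧
        (∀ k ∈ hypB r₁ r₂ (2 * t + 1), T.le l k →
          fApp U (f₁ - (b / v) • g) sh k = 0)) := by
  classical
  subst hU
  set S : Finset (L × L) := (Finset.univ.filter fun p : Fin r₁ × Fin r₂ => e p ≠ 0).image
      (fun p => (α₁ ^ ((p.1 : ℕ)), α₂ ^ ((p.2 : ℕ)))) with hSdef
  have hScard : S.card ≤ t := by
    refine le_trans Finset.card_image_le ?_
    have hwt : wt e = (Finset.univ.filter fun p : Fin r₁ × Fin r₂ => e p ≠ 0).card := by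
      rw [wt, show {p | e p ≠ 0} = ↑(Finset.univ.filter fun p : Fin r₁ × Fin r₂ => e p ≠ 0)
        from by ext p; simp, Set.ncard_coe_finset]
    omega
  have hvanS : ∀ f : (ℕ × ℕ) →₀ L, (∀ p ∈ S, polyEval f p.1 p.2 = 0) →
      ∀ s n : ℕ × ℕ, fApp (synTable α₁ α₂ τ e) f s n = 0 := by
    intro f hf s n
    refine vanish_of_roots α₁ α₂ τ e f ?_ s n
    intro p hp
    exact hf _ (Finset.mem_image_of_mem _ (Finset.mem_filter.2 ⟨Finset.mem_univ _, hp⟩))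
  have hbox : ∀ f : (ℕ × ℕ) →₀ L, f.support.Nonempty →
      (∀ m ∈ f.support, m.1 ≤ s₁.1 - 1 ∧ m.2 ≤ s₂.2 - 1) →
      (∀ p ∈ S, polyEval f p.1 p.2 = 0) → False := by
    intro f hne hb hf
    obtain ⟨sg', hsg', hmax⟩ := MonOrd.exists_max T f.support hne
    obtain ⟨k, _, _, _, hk⟩ := hmin f sg' ⟨hsg', hmax⟩ (hb _ hsg').1 (hb _ hsg').2
    exact hk (hvanS f hf sg' k)
  have hvcond : sg.1 ≤ k₀.1 ∧ sg.2 ≤ k₀.2 := by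
    by_contra hcon
    rw [fApp, if_neg hcon] at hv
    exact hv0 hv.symm
  have hk₀LP' : k₀.1 - sg.1 = s₁.1 - 1 ∧ k₀.2 - sg.2 = s₂.2 - 1 := by
    rw [Prod.mk.injEq] at hk₀LP; exact hk₀LP
  constructor
  · -- case (a)
    rintro ⟨rfl, hs22⟩
    have hs11 : s₁.1 = 1 := by
      by_contra hne
      obtain ⟨f, hfne, hfbox, hfvan⟩ := construct_locator t ht1 S hScard
      exact hbox f hfne (fun m hm => ⟨by have := (hfbox m hm).1; omega,
        by have := (hfbox m hm).2; omega⟩) hfvan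
    have hk01 : k₀.1 = sg.1 := by omega
    have hk02 : k₀.2 = sg.2 + (t - 1) := by omega
    have hlt : T.lt sg s₂ := by
      rcases hT with rfl | rfl
      · have h1 : k₀.1 < 0 ∨ (k₀.1 = 0 ∧ k₀.2 ≤ 2 * t - 1) := hk₀l.1
        have h2 : k₀ ≠ (0, 2 * t - 1) := hk₀l.2
        rw [Ne, Prod.ext_iff] at h2
        refine ⟨?_, ?_⟩
        · show sg.1 < s₂.1 ∨ (sg.1 = s₂.1 ∧ sg.2 ≤ s₂.2)
          omega
        · rw [Ne, Prod.ext_iff]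
          omega
      · have h1 : k₀.1 + k₀.2 < 0 + (2 * t - 1) ∨
            (k₀.1 + k₀.2 = 0 + (2 * t - 1) ∧ k₀.2 ≤ 2 * t - 1) := hk₀l.1
        have h2 : k₀ ≠ (0, 2 * t - 1) := hk₀l.2
        rw [Ne, Prod.ext_iff] at h2
        refine ⟨?_, ?_⟩
        · show sg.1 + sg.2 < s₂.1 + s₂.2 ∨ (sg.1 + sg.2 = s₂.1 + s₂.2 ∧ sg.2 ≤ s₂.2)
          omega
        · rw [Ne, Prod.ext_iff]
          omega
    have hgs₂ : g s₂ = 0 := by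
      by_contra hgs
      have := hgLP.2 s₂ (Finsupp.mem_support_iff.2 hgs)
      exact hlt.2 (T.antisymm _ _ hlt.1 this)
    refine ⟨fApp (synTable α₁ α₂ τ e) f₂ s₂ ((0 : ℕ), 2 * t - 1), s₂, ⟨?_, ?_⟩, ?_, ?_⟩
    · refine Finsupp.mem_support_iff.2 ?_
      rw [Finsupp.sub_apply, Finsupp.smul_apply, hgs₂, smul_zero, sub_zero]
      exact Finsupp.mem_support_iff.1 hLP2.1
    · intro m hm
      rw [Finsupp.mem_support_iff, Finsupp.sub_apply, Finsupp.smul_apply, smul_eq_mul] at hm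
      by_cases hf : f₂ m = 0
      · have hg : g m ≠ 0 := by
          intro h0; rw [hf, h0, mul_zero, sub_zero] at hm; exact hm rfl
        exact T.trans _ _ _ (hgLP.2 m (Finsupp.mem_support_iff.2 hg)) hlt.1
      · exact hLP2.2 m (Finsupp.mem_support_iff.2 hf)
    · intro k hk1 hk2 hkl
      rw [fApp_sub_smul _ _ _ _ s₂ sg k hk1 hk2, hgen2 k hk1 hk2 hkl]
      have e1 : ((k.1 - s₂.1 + sg.1, k.2 - s₂.2 + sg.2) : ℕ × ℕ) + s₂ = k + sg := by
        rw [Prod.ext_iff, Prod.fst_add, Prod.fst_add, Prod.snd_add, Prod.snd_add]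
        constructor <;> simp only [] <;> omega
      have e2 : k₀ + s₂ = ((0 : ℕ), 2 * t - 1) + sg := by
        rw [Prod.ext_iff, Prod.fst_add, Prod.fst_add, Prod.snd_add, Prod.snd_add]
        constructor <;> simp only [] <;> omega
      have hlt' : T.lt (k.1 - s₂.1 + sg.1, k.2 - s₂.2 + sg.2) k₀ := by
        apply MonOrd.lt_of_add_right T _ _ s₂
        rw [e1, e2]
        exact MonOrd.lt_add_right T _ _ sg hkl
      rw [hgpast _ (by show sg.1 ≤ k.1 - s₂.1 + sg.1; omega)
        (by show sg.2 ≤ k.2 - s₂.2 + sg.2; omega) hlt']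
      ring
    · intro k hkB hlk
      by_cases hc2 : s₂.1 ≤ k.1 ∧ s₂.2 ≤ k.2
      · obtain ⟨hkr1, hkr2, hkm, hkne1, hkne2⟩ := hkB
        have hk10 : k.1 = 0 := by
          by_contra hcon
          have h1 : 2 * (t + 1) ≤ (k.1 + 1) * (k.2 + 1) :=
            le_trans (Nat.mul_le_mul_right _ (by omega)) (Nat.mul_le_mul_left _ (by omega))
          omega
        rw [hk10] at hkm
        norm_num at hkm
        rw [Ne, Prod.ext_iff] at hkne2
        have hk2b : k.2 ≤ 2 * t - 1 := by omega
        have hk2c : 2 * t - 1 ≤ k.2 := by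
          rcases hT with rfl | rfl
          · have h : (0 : ℕ) < k.1 ∨ ((0 : ℕ) = k.1 ∧ 2 * t - 1 ≤ k.2) := hlk
            omega
          · have h : 0 + (2 * t - 1) < k.1 + k.2 ∨
                (0 + (2 * t - 1) = k.1 + k.2 ∧ 2 * t - 1 ≤ k.2) := hlk
            omega
        have hkl' : k = ((0 : ℕ), 2 * t - 1) := by
          rw [Prod.ext_iff]; omega
        rw [hkl']
        rw [fApp_sub_smul _ _ _ _ s₂ sg _ (by show s₂.1 ≤ 0; omega)
          (by show s₂.2 ≤ 2 * t - 1; omega)]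
        have e3 : ((((0 : ℕ), 2 * t - 1) : ℕ × ℕ).1 - s₂.1 + sg.1,
            (((0 : ℕ), 2 * t - 1) : ℕ × ℕ).2 - s₂.2 + sg.2) = k₀ := by
          rw [Prod.ext_iff]
          constructor <;> simp only [] <;> omega
        rw [e3, hv, div_mul_cancel₀ _ hv0, sub_self]
      · rw [fApp, if_neg hc2]
  · -- case (b)
    rintro ⟨rfl, hs11⟩
    have hs22 : s₂.2 = 1 := by
      by_contra hne
      obtain ⟨f, hfne, hfbox, hfvan⟩ := construct_locator' t ht1 S hScard
      exact hbox f hfne (fun m hm => ⟨by have := (hfbox m hm).1; omega,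
        by have := (hfbox m hm).2; omega⟩) hfvan
    have hk01 : k₀.1 = sg.1 + (t - 1) := by omega
    have hk02 : k₀.2 = sg.2 := by omega
    have hlt : T.lt sg s₁ := by
      rcases hT with rfl | rfl
      · have h1 : k₀.1 < 2 * t - 1 ∨ (k₀.1 = 2 * t - 1 ∧ k₀.2 ≤ 0) := hk₀l.1
        have h2 : k₀ ≠ (2 * t - 1, 0) := hk₀l.2
        rw [Ne, Prod.ext_iff] at h2
        refine ⟨?_, ?_⟩
        · show sg.1 < s₁.1 ∨ (sg.1 = s₁.1 ∧ sg.2 ≤ s₁.2)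
          omega
        · rw [Ne, Prod.ext_iff]
          omega
      · have h1 : k₀.1 + k₀.2 < (2 * t - 1) + 0 ∨
            (k₀.1 + k₀.2 = (2 * t - 1) + 0 ∧ k₀.2 ≤ 0) := hk₀l.1
        have h2 : k₀ ≠ (2 * t - 1, 0) := hk₀l.2
        rw [Ne, Prod.ext_iff] at h2
        refine ⟨?_, ?_⟩
        · show sg.1 + sg.2 < s₁.1 + s₁.2 ∨ (sg.1 + sg.2 = s₁.1 + s₁.2 ∧ sg.2 ≤ s₁.2)
          omega
        · rw [Ne, Prod.ext_iff]
          omega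
    have hgs₁ : g s₁ = 0 := by
      by_contra hgs
      have := hgLP.2 s₁ (Finsupp.mem_support_iff.2 hgs)
      exact hlt.2 (T.antisymm _ _ hlt.1 this)
    refine ⟨fApp (synTable α₁ α₂ τ e) f₁ s₁ (2 * t - 1, (0 : ℕ)), s₁, ⟨?_, ?_⟩, ?_, ?_⟩
    · refine Finsupp.mem_support_iff.2 ?_
      rw [Finsupp.sub_apply, Finsupp.smul_apply, hgs₁, smul_zero, sub_zero]
      exact Finsupp.mem_support_iff.1 hLP1.1
    · intro m hm
      rw [Finsupp.mem_support_iff, Finsupp.sub_apply, Finsupp.smul_apply, smul_eq_mul] at hm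
      by_cases hf : f₁ m = 0
      · have hg : g m ≠ 0 := by
          intro h0; rw [hf, h0, mul_zero, sub_zero] at hm; exact hm rfl
        exact T.trans _ _ _ (hgLP.2 m (Finsupp.mem_support_iff.2 hg)) hlt.1
      · exact hLP1.2 m (Finsupp.mem_support_iff.2 hf)
    · intro k hk1 hk2 hkl
      rw [fApp_sub_smul _ _ _ _ s₁ sg k hk1 hk2, hgen1 k hk1 hk2 hkl]
      have e1 : ((k.1 - s₁.1 + sg.1, k.2 - s₁.2 + sg.2) : ℕ × ℕ) + s₁ = k + sg := by
        rw [Prod.ext_iff, Prod.fst_add, Prod.fst_add, Prod.snd_add, Prod.snd_add]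
        constructor <;> simp only [] <;> omega
      have e2 : k₀ + s₁ = ((2 * t - 1, (0 : ℕ)) : ℕ × ℕ) + sg := by
        rw [Prod.ext_iff, Prod.fst_add, Prod.fst_add, Prod.snd_add, Prod.snd_add]
        constructor <;> simp only [] <;> omega
      have hlt' : T.lt (k.1 - s₁.1 + sg.1, k.2 - s₁.2 + sg.2) k₀ := by
        apply MonOrd.lt_of_add_right T _ _ s₁
        rw [e1, e2]
        exact MonOrd.lt_add_right T _ _ sg hkl
      rw [hgpast _ (by show sg.1 ≤ k.1 - s₁.1 + sg.1; omega)
        (by show sg.2 ≤ k.2 - s₁.2 + sg.2; omega) hlt']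
      ring
    · intro k hkB hlk
      by_cases hc2 : s₁.1 ≤ k.1 ∧ s₁.2 ≤ k.2
      · obtain ⟨hkr1, hkr2, hkm, hkne1, hkne2⟩ := hkB
        have hk20 : k.2 = 0 := by
          by_contra hcon
          have h1 : (t + 1) * 2 ≤ (k.1 + 1) * (k.2 + 1) :=
            le_trans (Nat.mul_le_mul_left _ (by omega)) (Nat.mul_le_mul_right _ (by omega))
          omega
        rw [hk20] at hkm
        norm_num at hkm
        rw [Ne, Prod.ext_iff] at hkne1
        have hk1b : k.1 ≤ 2 * t - 1 := by omega
        have hk1c : 2 * t - 1 ≤ k.1 := by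
          rcases hT with rfl | rfl
          · have h : 2 * t - 1 < k.1 ∨ (2 * t - 1 = k.1 ∧ (0 : ℕ) ≤ k.2) := hlk
            omega
          · have h : (2 * t - 1) + 0 < k.1 + k.2 ∨
                ((2 * t - 1) + 0 = k.1 + k.2 ∧ (0 : ℕ) ≤ k.2) := hlk
            omega
        have hkl' : k = ((2 * t - 1, (0 : ℕ)) : ℕ × ℕ) := by
          rw [Prod.ext_iff]; omega
        rw [hkl']
        rw [fApp_sub_smul _ _ _ _ s₁ sg _ (by show s₁.1 ≤ 2 * t - 1; omega)
          (by show s₁.2 ≤ 0; omega)]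
        have e3 : (((2 * t - 1, (0 : ℕ)) : ℕ × ℕ).1 - s₁.1 + sg.1,
            ((2 * t - 1, (0 : ℕ)) : ℕ × ℕ).2 - s₁.2 + sg.2) = k₀ := by
          rw [Prod.ext_iff]
          constructor <;> simp only [] <;> omega
        rw [e3, hv, div_mul_cancel₀ _ hv0, sub_self]
      · rw [fApp, if_neg hc2]
end
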